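/- arXiv:1401.1583 — 2 statements merged into one kernel-verified Lean document; each statement's English description precedes it below -/
import Mathlib

section
/- Let k, ℓ be positive integers with k ≠ ℓ. There is a short exact sequence 0 → ℤ → ℤ[1/|k−ℓ|] ⊕ ℤ → ℤ/2ℤ ⊕ ℤ[1/|k−ℓ|] → 0, where the first map sends n to (0, 2n). -/
/-- The subgroup `ℤ[1/n] = {a/n^k : a ∈ ℤ, k ∈ ℕ}` of `ℚ`. -/
def ZInv (n : ℤ) : AddSubgroup ℚ where
  carrier := {q : ℚ | ∃ (a : ℤ) (k : ℕ), q = (a : ℚ) / (n : ℚ) ^ k}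
  zero_mem' := ⟨0, 0, by simp⟩
  add_mem' := by
    rintro x y ⟨a, k, rfl⟩ ⟨b, m, rfl⟩
    rcases eq_or_ne (n : ℚ) 0 with h | h
    · rcases Nat.eq_zero_or_pos k with rfl | hk
      · rcases Nat.eq_zero_or_pos m with rfl | hm
        · exact ⟨a + b, 0, by push_cast; simp⟩
        · exact ⟨a, 0, by simp [h, zero_pow hm.ne']⟩
      · rcases Nat.eq_zero_or_pos m with rfl | hm
        · exact ⟨b, 0, by simp [h, zero_pow hk.ne']⟩
        · exact ⟨0, 0, by simp [h, zero_pow hk.ne', zero_pow hm.ne']⟩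
    · refine ⟨a * n ^ m + b * n ^ k, k + m, ?_⟩
      rw [div_add_div _ _ (pow_ne_zero k h) (pow_ne_zero m h), pow_add]
      push_cast
      ring_nf
  neg_mem' := by
    rintro x ⟨a, k, rfl⟩
    exact ⟨-a, k, by push_cast; ring⟩
/-- For positive integers `k ≠ ℓ`, there is a short exact sequence
`0 → ℤ → ℤ[1/|k−ℓ|] ⊕ ℤ → ℤ/2ℤ ⊕ ℤ[1/|k−ℓ|] → 0`, where the first map sends
`n` to `(0, 2n)`. -/
theorem ses_quotient_cohomologies (k l : ℤ) (hk : 0 < k) (hl : 0 < l) (hne : k ≠ l) :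
    ∃ g : (ZInv |k - l| × ℤ) →+ (ZMod 2 × ZInv |k - l|),
      Function.Injective
        (fun n : ℤ => ((0 : ZInv |k - l|), 2 * n)) ∧
      Function.Surjective g ∧
      Function.Exact
        (AddMonoidHom.mk' (fun n : ℤ => ((0 : ZInv |k - l|), 2 * n))
          (by intro p q; simp [Prod.ext_iff]; ring)) g := by
  refine ⟨AddMonoidHom.mk' (fun p => (((p.2 : ℤ) : ZMod 2), p.1))
      (by intro p q; simp [Prod.ext_iff]), ?_, ?_, ?_⟩
  · intro a b h
    have h2 := congrArg Prod.snd h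
    simp only at h2
    omega
  · rintro ⟨z, x⟩
    obtain ⟨m, hm⟩ := ZMod.intCast_surjective z
    exact ⟨(x, m), by simp [hm]⟩
  · rintro ⟨x, m⟩
    constructor
    · intro h
      simp only [AddMonoidHom.mk'_apply, Prod.mk_eq_zero] at h
      obtain ⟨h1, h2⟩ := h
      rw [ZMod.intCast_zmod_eq_zero_iff_dvd] at h1
      obtain ⟨n, rfl⟩ := h1
      exact ⟨n, by simp [h2]⟩
    · rintro ⟨n, hn⟩
      simp only [AddMonoidHom.mk'_apply] at hn ⊢
      obtain ⟨h1, h2⟩ := Prod.mk.injEq .. ▸ hn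
      exact Prod.ext ((ZMod.intCast_zmod_eq_zero_iff_dvd m 2).2 ⟨n, h2.symm⟩) h1.symm
end

section
/- Let m ≥ 2 and let f : ℤ[1/m] → ℤ[1/m] be an injective group homomorphism. Then f is multiplication by some nonzero rational q such that q·ℤ[1/m] ⊆ ℤ[1/m], and the quotient ℤ[1/m]/f(ℤ[1/m]) is a finite cyclic group whose order is coprime to m. -/
lemma ZInv_quot_aux (m : ℤ) (hm : 2 ≤ m) (N : ℕ)
    (hu : IsUnit ((m : ℤ) : ZMod N)) (H : AddSubgroup (ZInv m))
    (hH : ∀ y : ZInv m, y ∈ H ↔ ∃ (c : ℤ) (k : ℕ), (y : ℚ) = (N : ℚ) * c / (m : ℚ) ^ k) :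
    Nonempty ((ZInv m ⧸ H) ≃+ ZMod N) := by
  have hm0 : (m : ℚ) ≠ 0 := by
    have : (0:ℚ) < (m:ℚ) := by exact_mod_cast lt_of_lt_of_le (by norm_num) hm
    exact this.ne'
  obtain ⟨U, hU⟩ := hu
  set u : ZMod N := ((U⁻¹ : (ZMod N)ˣ) : ZMod N) with hu_def
  have hmu : ((m : ℤ) : ZMod N) * u = 1 := by rw [← hU]; exact U.mul_inv
  have hmem : ∀ y : ZInv m, ∃ (a : ℤ) (k : ℕ), (y : ℚ) = (a : ℚ) / (m : ℚ) ^ k :=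
    fun y => y.2
  set φfun : ZInv m → ZMod N := fun y =>
    (((hmem y).choose : ℤ) : ZMod N) * u ^ ((hmem y).choose_spec.choose) with hφfun
  have wd0 : ∀ (b c : ℤ) (j k : ℕ), (b : ℚ) / (m:ℚ) ^ j = (c : ℚ) / (m:ℚ) ^ k →
      ((b : ℤ) : ZMod N) * u ^ j = ((c : ℤ) : ZMod N) * u ^ k := by
    intro b c j k h
    have hZ : b * m ^ k = c * m ^ j := by
      have : (b : ℚ) * (m:ℚ) ^ k = (c : ℚ) * (m:ℚ) ^ j := by
        field_simp at h
        linarith [h]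
      exact_mod_cast this
    have h2 : ((b : ℤ) : ZMod N) * ((m:ℤ) : ZMod N) ^ k
        = ((c : ℤ) : ZMod N) * ((m:ℤ) : ZMod N) ^ j := by
      have := congrArg (fun z : ℤ => (z : ZMod N)) hZ
      push_cast at this
      exact this
    have h3 : ∀ i : ℕ, ((m:ℤ) : ZMod N) ^ i * u ^ i = 1 := by
      intro i; rw [← mul_pow, hmu, one_pow]
    have h4 : ((b : ℤ) : ZMod N) * u ^ j * (((m:ℤ) : ZMod N) ^ k * u ^ k)
        = ((c : ℤ) : ZMod N) * u ^ k * (((m:ℤ) : ZMod N) ^ j * u ^ j) := by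
      linear_combination (u ^ j * u ^ k) * h2
    rwa [h3, h3, mul_one, mul_one] at h4
  have wd : ∀ (y : ZInv m) (b : ℤ) (k : ℕ), (y : ℚ) = (b : ℚ) / (m:ℚ) ^ k →
      φfun y = ((b : ℤ) : ZMod N) * u ^ k := by
    intro y b k h
    exact wd0 _ _ _ _ (((hmem y).choose_spec.choose_spec).symm.trans h)
  set φ : ZInv m →+ ZMod N :=
    { toFun := φfun
      map_zero' := by
        have := wd 0 0 0 (by simp)
        simpa using this
      map_add' := by
        intro x y
        obtain ⟨a, j, ha⟩ := hmem x
        obtain ⟨b, k, hb⟩ := hmem y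
        have hxy : ((x + y : ZInv m) : ℚ)
            = ((a * m ^ k + b * m ^ j : ℤ) : ℚ) / (m:ℚ) ^ (j + k) := by
          have hc : ((x + y : ZInv m) : ℚ) = (x : ℚ) + (y : ℚ) := rfl
          rw [hc, ha, hb, div_add_div _ _ (pow_ne_zero j hm0) (pow_ne_zero k hm0), pow_add]
          push_cast
          ring
        show φfun (x + y) = φfun x + φfun y
        rw [wd _ _ _ hxy, wd _ _ _ ha, wd _ _ _ hb]
        have h3 : ∀ i : ℕ, ((m:ℤ) : ZMod N) ^ i * u ^ i = 1 := by
          intro i; rw [← mul_pow, hmu, one_pow]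
        push_cast
        calc ((a : ZMod N) * ((m:ℤ) : ZMod N) ^ k + (b : ZMod N) * ((m:ℤ) : ZMod N) ^ j)
              * u ^ (j + k)
            = (a : ZMod N) * u ^ j * (((m:ℤ) : ZMod N) ^ k * u ^ k)
              + (b : ZMod N) * u ^ k * (((m:ℤ) : ZMod N) ^ j * u ^ j) := by
              rw [pow_add]; ring
          _ = (a : ZMod N) * u ^ j + (b : ZMod N) * u ^ k := by
              rw [h3, h3, mul_one, mul_one] } with hφ
  have hsurj : Function.Surjective φ := by
    intro z
    obtain ⟨c, rfl⟩ := ZMod.intCast_surjective z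
    refine ⟨⟨(c : ℚ), c, 0, by simp⟩, ?_⟩
    have := wd ⟨(c : ℚ), c, 0, by simp⟩ c 0 (by simp)
    simp at this
    exact this
  have hker : H = φ.ker := by
    ext y
    rw [AddMonoidHom.mem_ker, hH]
    constructor
    · rintro ⟨c, k, hck⟩
      have h1 : (y : ℚ) = ((N * c : ℤ) : ℚ) / (m:ℚ) ^ k := by push_cast; rw [hck]
      show φfun y = 0
      rw [wd _ _ _ h1]
      have : ((N * c : ℤ) : ZMod N) = 0 := by
        push_cast
        simp [ZMod.natCast_self]
      rw [this, zero_mul]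
    · intro h0
      obtain ⟨b, k, hbk⟩ := hmem y
      have h1 : φfun y = ((b : ℤ) : ZMod N) * u ^ k := wd _ _ _ hbk
      have h2 : ((b : ℤ) : ZMod N) * u ^ k = 0 := h1 ▸ h0
      have huk : IsUnit (u ^ k) := ((U⁻¹).isUnit).pow k
      have h3 : ((b : ℤ) : ZMod N) = 0 := (huk.mul_left_eq_zero).mp h2
      obtain ⟨c, hc⟩ := (ZMod.intCast_zmod_eq_zero_iff_dvd b N).mp h3
      exact ⟨c, k, by rw [hbk, hc]; push_cast; ring⟩
  exact ⟨(QuotientAddGroup.quotientAddEquivOfEq hker).trans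
    (QuotientAddGroup.quotientKerEquivOfSurjective φ hsurj)⟩

/-- Every injective endomorphism `f` of `ℤ[1/m]` (for `m ≥ 2`) is multiplication by a
nonzero rational `q` with `q·ℤ[1/m] ⊆ ℤ[1/m]`, and the cokernel `ℤ[1/m]/f(ℤ[1/m])` is a
finite cyclic group whose order is coprime to `m`. -/
theorem ZInv_injective_endomorphism (m : ℤ) (hm : 2 ≤ m)
    (f : (ZInv m) →+ (ZInv m)) (hf : Function.Injective f) :
    ∃ q : ℚ, q ≠ 0 ∧ (∀ x : ZInv m, ((f x : ℚ)) = q * (x : ℚ)) ∧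
      (∀ x : ZInv m, q * (x : ℚ) ∈ ZInv m) ∧
      ∃ N : ℕ, 0 < N ∧ IsCoprime (N : ℤ) m ∧
        Nonempty (((ZInv m) ⧸ f.range) ≃+ ZMod N) := by
  have hm0 : (m : ℚ) ≠ 0 := by
    have : (0:ℚ) < (m:ℚ) := by exact_mod_cast lt_of_lt_of_le (by norm_num) hm
    exact this.ne'
  set one : ZInv m := ⟨1, 1, 0, by norm_num⟩ with hone
  set q : ℚ := (f one : ℚ) with hqdef
  -- f is multiplication by q
  have key : ∀ x : ZInv m, (f x : ℚ) = q * (x : ℚ) := by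
    intro x
    obtain ⟨b, k, hbk⟩ := x.2
    have h1 : (m ^ k : ℤ) • x = b • one := by
      apply Subtype.ext
      show ((m ^ k : ℤ) • x : ZInv m).1 = (b • one : ZInv m).1
      have e1 : ((m ^ k : ℤ) • x : ZInv m).1 = ((m ^ k : ℤ) : ℚ) * (x : ℚ) := by
        simp [zsmul_eq_mul]
      have e2 : (b • one : ZInv m).1 = (b : ℚ) * (1 : ℚ) := by
        simp [zsmul_eq_mul, hone]
      rw [e1, e2, hbk]
      push_cast
      field_simp
    have h2 := congrArg f h1
    rw [map_zsmul, map_zsmul] at h2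
    have h3 : ((m ^ k : ℤ) : ℚ) * (f x : ℚ) = (b : ℚ) * q := by
      have := congrArg (fun z : ZInv m => (z : ℚ)) h2
      simpa [zsmul_eq_mul] using this
    rw [hbk]
    push_cast at h3
    field_simp
    linarith [h3]
  have hq0 : q ≠ 0 := by
    intro h
    have hfo : f one = 0 := by
      apply Subtype.ext
      show (f one : ℚ) = 0
      rw [← hqdef, h]
    have : one = 0 := hf (by rw [hfo, map_zero])
    have : (1 : ℚ) = 0 := congrArg (fun z : ZInv m => (z : ℚ)) this
    norm_num at this
  obtain ⟨a₀, k₀, hq⟩ := (f one).2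
  have ha₀ : a₀ ≠ 0 := by
    intro h
    apply hq0
    rw [hqdef, hq, h]
    simp
  have hq' : q = (a₀ : ℚ) / (m : ℚ) ^ k₀ := hqdef.trans hq
  set M : ℕ := m.toNat with hMdef
  have hMm : (M : ℤ) = m := Int.toNat_of_nonneg (by linarith)
  have hM0 : M ≠ 0 := by omega
  set A : ℕ := a₀.natAbs with hAdef
  have hA : A ≠ 0 := Int.natAbs_ne_zero.mpr ha₀
  set g : ℕ := Nat.gcd A (M ^ A) with hgdef
  have hgA : g ∣ A := Nat.gcd_dvd_left _ _
  have hgM : g ∣ M ^ A := Nat.gcd_dvd_right _ _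
  have hg0 : g ≠ 0 := by
    intro h
    rw [hgdef, Nat.gcd_eq_zero_iff] at h
    exact hA h.1
  set N : ℕ := A / g with hNdef
  have hNg : N * g = A := Nat.div_mul_cancel hgA
  have hN0 : 0 < N := by
    rcases Nat.eq_zero_or_pos N with h | h
    · exfalso; apply hA; rw [← hNg, h, zero_mul]
    · exact h
  -- N is coprime to M
  have hcop : Nat.Coprime N M := by
    by_contra hnc
    obtain ⟨p, hp, hpd⟩ := Nat.exists_prime_and_dvd hnc
    have hpN : p ∣ N := hpd.trans (Nat.gcd_dvd_left _ _)
    have hpM : p ∣ M := hpd.trans (Nat.gcd_dvd_right _ _)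
    have hgA' : p ^ (g.factorization p + 1) ∣ A := by
      have h1 : p ^ (g.factorization p) ∣ g := Nat.ordProj_dvd g p
      have h2 : p ^ (g.factorization p + 1) = p * p ^ (g.factorization p) := by ring
      rw [h2, ← hNg]
      exact mul_dvd_mul hpN h1
    have hvA : g.factorization p + 1 ≤ A.factorization p :=
      (Nat.Prime.pow_dvd_iff_le_factorization hp hA).mp hgA'
    have hgf : g.factorization p = min (A.factorization p) (A * M.factorization p) := by
      rw [hgdef, Nat.factorization_gcd hA (pow_ne_zero _ hM0), Finsupp.inf_apply,
        Nat.factorization_pow]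
      simp
    have hMp : 1 ≤ M.factorization p := hp.factorization_pos_of_dvd hM0 hpM
    have hlt : A.factorization p < A := Nat.factorization_lt p hA
    have hle : A ≤ A * M.factorization p := Nat.le_mul_of_pos_right A hMp
    omega
  -- the unit
  have hu : IsUnit ((m : ℤ) : ZMod N) := by
    have h1 : ((m : ℤ) : ZMod N) = ((M : ℕ) : ZMod N) := by
      rw [← hMm]; push_cast; rfl
    rw [h1, ← ZMod.coe_unitOfCoprime M hcop.symm]
    exact (ZMod.unitOfCoprime M hcop.symm).isUnit
  -- decomposition of a₀
  obtain ⟨s, hss, hsa⟩ : ∃ s : ℤ, s * s = 1 ∧ a₀ = s * ((N : ℤ) * g) := by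
    rcases Int.natAbs_eq a₀ with h | h
    · exact ⟨1, by norm_num, by rw [h, ← hAdef, ← hNg]; push_cast; ring⟩
    · exact ⟨-1, by norm_num, by rw [h, ← hAdef, ← hNg]; push_cast; ring⟩
  obtain ⟨t, ht⟩ := hgM
  have hMQ : ((M : ℕ) : ℚ) = (m : ℚ) := by rw [← hMm]; push_cast; ring
  have hgt : (g : ℚ) * (t : ℚ) = (m : ℚ) ^ A := by
    have h1 := congrArg (fun z : ℕ => (z : ℚ)) ht
    push_cast at h1
    rw [← hMQ]
    linarith [h1]
  -- characterize the range
  have hH : ∀ y : ZInv m, y ∈ f.range ↔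
      ∃ (c : ℤ) (k : ℕ), (y : ℚ) = (N : ℚ) * c / (m : ℚ) ^ k := by
    intro y
    constructor
    · rintro ⟨x, rfl⟩
      obtain ⟨b, j, hbj⟩ := x.2
      refine ⟨s * g * b, k₀ + j, ?_⟩
      rw [key x, hq', hbj, hsa, pow_add]
      push_cast
      field_simp
    · rintro ⟨c, k, hck⟩
      refine ⟨⟨((s * c * t * m ^ k₀ : ℤ) : ℚ) / (m : ℚ) ^ (k + A),
        s * c * t * m ^ k₀, k + A, rfl⟩, ?_⟩
      apply Subtype.ext
      show (f _ : ℚ) = (y : ℚ)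
      rw [key _]
      show q * (((s * c * t * m ^ k₀ : ℤ) : ℚ) / (m : ℚ) ^ (k + A)) = (y : ℚ)
      rw [hck, hq', hsa, pow_add]
      push_cast
      have hss' : (s : ℚ) * (s : ℚ) = 1 := by exact_mod_cast hss
      field_simp
      linear_combination ((g:ℚ) * c * (t:ℚ)) * hss'
        + (c : ℚ) * hgt
  have hIsCop : IsCoprime (N : ℤ) m := by
    rw [← hMm]
    exact_mod_cast hcop.isCoprime
  refine ⟨q, hq0, key, fun x => ?_, N, hN0, hIsCop, ?_⟩
  · rw [← key x]; exact (f x).2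
  · exact ZInv_quot_aux m hm N hu f.range hH
end
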